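/- (Closed form of the proximal operator of the hinge loss.) Let γ > 0 and a, b ∈ ℝ, and define g : ℝ → ℝ by g(u) = max(0, 1 − a·u) + (γ/2)(u − b)². Then: (i) if a = 0, then u* = b is a global minimizer of g; (ii) if a ≠ 0 and a·b ≤ 1 − γ⁻¹a², then u* = b + γ⁻¹a is a global minimizer of g; (iii) if a ≠ 0 and 1 − γ⁻¹a² < a·b < 1, then u* = a⁻¹ is a global minimizer of g; (iv) if a ≠ 0 and a·b ≥ 1, then u* = b is a global minimizer of g. -/

import Mathlib

/-- Closed form of the proximal operator of the hinge loss
`g(u) = max(0, 1 − a·u) + (γ/2)(u − b)²`. -/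
theorem hinge_prox_closed_form (γ a b : ℝ) (hγ : 0 < γ)
    (g : ℝ → ℝ)
    (hg : ∀ u : ℝ, g u = max 0 (1 - a * u) + (γ / 2) * (u - b) ^ 2) :
    (a = 0 → ∀ u : ℝ, g b ≤ g u) ∧
    (a ≠ 0 → a * b ≤ 1 - γ⁻¹ * a ^ 2 → ∀ u : ℝ, g (b + γ⁻¹ * a) ≤ g u) ∧
    (a ≠ 0 → 1 - γ⁻¹ * a ^ 2 < a * b → a * b < 1 → ∀ u : ℝ, g a⁻¹ ≤ g u) ∧
    (a ≠ 0 → 1 ≤ a * b → ∀ u : ℝ, g b ≤ g u) := by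
  have hγ' : γ ≠ 0 := ne_of_gt hγ
  set t := γ⁻¹ with htdef
  have ht : γ * t = 1 := mul_inv_cancel₀ hγ'
  have ht0 : 0 < t := inv_pos.mpr hγ
  refine ⟨?_, ?_, ?_, ?_⟩
  · intro ha u
    rw [hg, hg, ha]
    simp only [zero_mul, sub_zero]
    nlinarith [sq_nonneg (u - b)]
  · intro ha hab u
    have ha2 : (0:ℝ) < a ^ 2 := by positivity
    rw [hg, hg]
    have hpos : 0 ≤ 1 - a * (b + t * a) := by nlinarith
    rw [max_eq_right hpos]
    rcases le_or_gt (1 - a * u) 0 with h | h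
    · rw [max_eq_left h]
      have hc : 0 < 1 - a * b := by nlinarith
      have hd : 1 - a * b ≤ a * u - a * b := by linarith
      have hd2 : (1 - a*b)^2 ≤ (a*u - a*b)^2 := by nlinarith
      have e : 1 - a*(b + t*a) + γ/2*(b + t*a - b)^2 = (1 - a*b) - t*a^2/2 := by
        linear_combination (t*a^2/2) * ht
      rw [e]
      have hkey : 2*γ*a^2 * ((1 - a*b) - t*a^2/2) ≤ 2*γ*a^2 * (γ/2*(u-b)^2) := by
        have e2 : 2*γ*a^2 * ((1 - a*b) - t*a^2/2) = 2*γ*a^2*(1-a*b) - a^4 := by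
          linear_combination (-(a^4)) * ht
        rw [e2]
        nlinarith [sq_nonneg (γ*(1-a*b) - a^2),
          mul_le_mul_of_nonneg_left hd2 (sq_nonneg γ)]
      have := le_of_mul_le_mul_left hkey (by positivity : (0:ℝ) < 2*γ*a^2)
      linarith
    · rw [max_eq_right (le_of_lt h)]
      nlinarith [mul_nonneg hγ.le (sq_nonneg (u - b - t*a)), sq_nonneg (u - b - t*a)]
  · intro ha h1 h2 u
    have ha2 : (0:ℝ) < a ^ 2 := by positivity
    rw [hg, hg]
    have hmin : 1 - a * a⁻¹ = 0 := by field_simp; ring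
    rw [hmin, max_self]
    have h1' : γ * (1 - a * b) < a ^ 2 := by
      nlinarith [mul_lt_mul_of_pos_left h1 hγ]
    have hainv : a * a⁻¹ = 1 := mul_inv_cancel₀ ha
    rcases le_or_gt (1 - a * u) 0 with h | h
    · rw [max_eq_left h]
      have key : a^2 * ((a⁻¹ - b)^2) ≤ a^2 * ((u - b)^2) := by
        have e1 : a^2 * ((a⁻¹ - b)^2) = (1 - a*b)^2 := by
          field_simp
        have e2 : a^2 * ((u - b)^2) = (a*u - a*b)^2 := by ring
        rw [e1, e2]
        nlinarith [h, h2]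
      nlinarith [mul_le_mul_of_nonneg_left key (by positivity : (0:ℝ) ≤ γ/2 / a^2),
        mul_pos hγ ha2]
    · rw [max_eq_right (le_of_lt h)]
      have key : a^2 * ((γ/2) * (a⁻¹ - b)^2) ≤ a^2 * (1 - a*u + (γ/2) * (u - b)^2) := by
        have e1 : a^2 * ((γ/2) * (a⁻¹ - b)^2) = (γ/2) * (1 - a*b)^2 := by
          field_simp
        rw [e1]
        have htu : 0 ≤ 1 - a*u := le_of_lt h
        nlinarith [mul_nonneg htu (le_of_lt (sub_pos.mpr h1')), sq_nonneg (1 - a*u),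
          mul_nonneg (mul_nonneg hγ.le htu) htu]
      nlinarith [mul_le_mul_of_nonneg_left key (by positivity : (0:ℝ) ≤ 1 / a^2)]
  · intro ha hab u
    rw [hg, hg]
    have hb : 1 - a * b ≤ 0 := by linarith
    rw [max_eq_left hb]
    have := le_max_left 0 (1 - a*u)
    nlinarith [sq_nonneg (u - b)]
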